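/- Deflated GMRES convergence bound (Theorem 2): suppose A = V Λ V⁻¹ with V = [v₁, …, v_N] invertible and Λ = diag(λ₁, …, λ_N); let Z := [v₁, …, v_m] (1 ≤ m < N) with M := Zᴴ A Z invertible, and P := I − A Z M⁻¹ Zᴴ. Let V = Q R be a QR factorization of V with Q unitary and R upper triangular, and let R₂₂ denote the lower-right (N−m)×(N−m) block of R (which is invertible). Suppose the undeflated eigenvalues λ_{m+1}, …, λ_N all lie in the ellipse E(c, d, a), which does not contain the origin 0. Then for every j ≥ 1 the j-th GMRES residual for the deflated system P A x = P b, namely ‖r_j‖₂ := min_{ξ ∈ x₀ + K_j(P A, r₀)} ‖P b − P A ξ‖₂ with r₀ := P b − P A x₀, satisfies ‖r_j‖₂ ≤ κ₂(R₂₂) · (C_j(a/d) / |C_j(c/d)|) · ‖r₀‖₂. -/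

import Mathlib

open Matrix

/-- The Euclidean (ℓ²) norm on `ℂ^N`. -/
noncomputable def enorm2 {N : ℕ} (x : Fin N → ℂ) : ℝ :=
  Real.sqrt (∑ i, ‖x i‖ ^ 2)

/-- The `j`-th Krylov subspace `K_j(B, s) = span {s, B s, …, B^{j-1} s}`. -/
noncomputable def krylov {N : ℕ} (B : Matrix (Fin N) (Fin N) ℂ)
    (s : Fin N → ℂ) (j : ℕ) : Submodule ℂ (Fin N → ℂ) :=
  Submodule.span ℂ {v : Fin N → ℂ | ∃ i < j, v = (B ^ i) *ᵥ s}

/-- The spectral (ℓ²-operator) norm of a matrix. -/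
noncomputable def opNorm2 {n : Type*} [Fintype n] [DecidableEq n]
    (W : Matrix n n ℂ) : ℝ :=
  ‖Matrix.toEuclideanCLM (𝕜 := ℂ) W‖

/-- The ℓ²-condition number `κ₂(W) = ‖W‖₂ ‖W⁻¹‖₂`. -/
noncomputable def cond2 {n : Type*} [Fintype n] [DecidableEq n]
    (W : Matrix n n ℂ) : ℝ :=
  opNorm2 W * opNorm2 W⁻¹

/-- The closed ellipse `E(c, d, a)` in the complex plane with center `c`,
focal distance `d`, and semi-major axis `a`. -/
def ellipseE (c d a : ℝ) : Set ℂ :=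
  {z : ℂ | ‖z - ((c : ℂ) - (d : ℂ))‖ +
      ‖z - ((c : ℂ) + (d : ℂ))‖ ≤ 2 * a}


section Helpers

open Polynomial Polynomial.Chebyshev


lemma cheb_joukowski (u : ℂ) (hu : u ≠ 0) (n : ℕ) :
    (T ℂ n).eval ((u + u⁻¹) / 2) = (u ^ n + u⁻¹ ^ n) / 2 := by
  set θ : ℂ := -Complex.I * Complex.log u with hθdef
  have h1 : Complex.exp (θ * Complex.I) = u := by
    rw [hθdef]
    have : -Complex.I * Complex.log u * Complex.I = Complex.log u := by
      rw [mul_comm, ← mul_assoc]; simp [Complex.I_mul_I]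
    rw [this, Complex.exp_log hu]
  have h2 : Complex.exp (-θ * Complex.I) = u⁻¹ := by
    rw [neg_mul, Complex.exp_neg, h1]
  have hcos : Complex.cos θ = (u + u⁻¹) / 2 := by
    rw [Complex.cos, h1, h2]
  have hcosn : Complex.cos ((n : ℂ) * θ) = (u ^ n + u⁻¹ ^ n) / 2 := by
    rw [Complex.cos]
    have e1 : Complex.exp ((n : ℂ) * θ * Complex.I) = u ^ n := by
      rw [mul_assoc, Complex.exp_nat_mul, h1]
    have e2 : Complex.exp (-((n : ℂ) * θ) * Complex.I) = u⁻¹ ^ n := by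
      have : -((n : ℂ) * θ) * Complex.I = (n : ℂ) * (-θ * Complex.I) := by ring
      rw [this, Complex.exp_nat_mul, h2]
    rw [e1, e2]
  have := Polynomial.Chebyshev.T_complex_cos θ (n : ℤ)
  rw [hcos] at this
  rw [this, ← hcosn]
  norm_cast

lemma cheb_real_joukowski (t : ℝ) (ht : t ≠ 0) (n : ℕ) :
    (T ℝ n).eval ((t + t⁻¹) / 2) = (t ^ n + t⁻¹ ^ n) / 2 := by
  have hmap : ∀ x : ℝ, (((T ℝ (n:ℤ)).eval x : ℝ) : ℂ) = (T ℂ (n:ℤ)).eval ((x : ℂ)) := by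
    intro x
    rw [← Polynomial.Chebyshev.map_T (algebraMap ℝ ℂ) (n : ℤ), Polynomial.eval_map,
      ← Complex.coe_algebraMap, Polynomial.eval₂_at_apply]
  have hu : ((t : ℂ)) ≠ 0 := by exact_mod_cast ht
  have := cheb_joukowski (t : ℂ) hu n
  have hcast : (((t + t⁻¹) / 2 : ℝ) : ℂ) = ((t:ℂ) + (t:ℂ)⁻¹) / 2 := by push_cast; ring
  have h2 : (((T ℝ (n:ℤ)).eval ((t + t⁻¹)/2) : ℝ) : ℂ) = (((t ^ n + t⁻¹ ^ n) / 2 : ℝ) : ℂ) := by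
    rw [hmap, hcast, this]; push_cast; ring
  exact_mod_cast h2

lemma f_mono {t s : ℝ} (ht : 1 ≤ t) (hts : t ≤ s) : t + t⁻¹ ≤ s + s⁻¹ := by
  have ht0 : 0 < t := by linarith
  have hs0 : 0 < s := by linarith
  have h1 : t * t⁻¹ = 1 := mul_inv_cancel₀ ht0.ne'
  have h2 : s * s⁻¹ = 1 := mul_inv_cancel₀ hs0.ne'
  have hst : 1 ≤ t * s := by nlinarith
  have hdiff : t⁻¹ - s⁻¹ = (s - t) / (t * s) := by
    field_simp
  have hle : (s - t) / (t * s) ≤ s - t := div_le_self (by linarith) hst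
  linarith

lemma f_rev {t s : ℝ} (ht : 1 ≤ t) (hs : 1 ≤ s) (h : t + t⁻¹ ≤ s + s⁻¹) : t ≤ s := by
  by_contra hc
  push_neg at hc
  have ht0 : 0 < t := by linarith
  have hs0 : 0 < s := by linarith
  have h1 : t * t⁻¹ = 1 := mul_inv_cancel₀ ht0.ne'
  have h2 : s * s⁻¹ = 1 := mul_inv_cancel₀ hs0.ne'
  have hst : 1 < t * s := by nlinarith
  have hdiff : s⁻¹ - t⁻¹ = (t - s) / (t * s) := by
    field_simp
  have hlt : (t - s) / (t * s) < t - s := div_lt_self (by linarith) hst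
  linarith

lemma jouk_param {x : ℝ} (hx : 1 ≤ x) : ∃ t : ℝ, 1 ≤ t ∧ (t + t⁻¹) / 2 = x := by
  have hnn : (0:ℝ) ≤ x ^ 2 - 1 := by nlinarith
  set s := Real.sqrt (x ^ 2 - 1) with hs
  have hs0 : 0 ≤ s := Real.sqrt_nonneg _
  have hs2 : s ^ 2 = x ^ 2 - 1 := Real.sq_sqrt hnn
  refine ⟨x + s, by linarith, ?_⟩
  have hne : x + s ≠ 0 := by positivity
  have hinv : (x + s)⁻¹ = x - s := inv_eq_of_mul_eq_one_right (by linear_combination -hs2)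
  rw [hinv]; ring

lemma cheb_mono (n : ℕ) {x y : ℝ} (hx : 1 ≤ x) (hxy : x ≤ y) :
    (Polynomial.Chebyshev.T ℝ n).eval x ≤ (Polynomial.Chebyshev.T ℝ n).eval y := by
  obtain ⟨t, ht, hxt⟩ := jouk_param hx
  obtain ⟨s, hs, hys⟩ := jouk_param (hx.trans hxy)
  have hts : t ≤ s := by
    apply f_rev ht hs
    have : (t + t⁻¹) / 2 ≤ (s + s⁻¹) / 2 := by rw [hxt, hys]; exact hxy
    linarith
  have ht0 : (0:ℝ) < t := by linarith
  have hs0 : (0:ℝ) < s := by linarith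
  rw [← hxt, ← hys, cheb_real_joukowski t ht0.ne' n, cheb_real_joukowski s hs0.ne' n]
  have h1 : (1:ℝ) ≤ t ^ n := one_le_pow₀ ht
  have h2 : t ^ n ≤ s ^ n := pow_le_pow_left₀ (by linarith) hts n
  have := f_mono h1 h2
  rw [inv_pow, inv_pow] at *
  linarith [this]

lemma one_le_cheb (n : ℕ) {x : ℝ} (hx : 1 ≤ x) : 1 ≤ (Polynomial.Chebyshev.T ℝ n).eval x := by
  have h := cheb_mono n le_rfl hx
  have h1 : (Polynomial.Chebyshev.T ℝ n).eval 1 = 1 := by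
    have := cheb_real_joukowski 1 one_ne_zero n
    simpa using this
  linarith [h, h1.symm.le]

lemma one_le_abs_cheb (n : ℕ) {x : ℝ} (hx : 1 ≤ |x|) :
    1 ≤ |(Polynomial.Chebyshev.T ℝ n).eval x| := by
  rcases le_total 0 x with hx0 | hx0
  · rw [abs_of_nonneg hx0] at hx
    have := one_le_cheb n hx
    calc (1:ℝ) ≤ _ := this
    _ ≤ _ := le_abs_self _
  · rw [abs_of_nonpos hx0] at hx
    -- x ≤ -1. Use parameter t = x - sqrt(x^2-1) ≤ -1.
    have hx1 : x ≤ -1 := by linarith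
    have hnn : (0:ℝ) ≤ x ^ 2 - 1 := by nlinarith
    set s := Real.sqrt (x ^ 2 - 1) with hs
    have hs0 : 0 ≤ s := Real.sqrt_nonneg _
    have hs2 : s ^ 2 = x ^ 2 - 1 := Real.sq_sqrt hnn
    set t := x - s with htdef
    have ht1 : t ≤ -1 := by linarith
    have ht0 : t ≠ 0 := by intro h; rw [h] at ht1; linarith
    have hinv : t⁻¹ = x + s := inv_eq_of_mul_eq_one_right (by linear_combination -hs2)
    have hxeq : (t + t⁻¹) / 2 = x := by rw [hinv]; ring
    rw [← hxeq, cheb_real_joukowski t ht0 n]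
    set r := -t with hrdef
    have hr1 : 1 ≤ r := by linarith
    have hr0 : (0:ℝ) < r := by linarith
    have hteq : t = -r := by rw [hrdef]; ring
    have : t ^ n + t⁻¹ ^ n = (-1:ℝ) ^ n * (r ^ n + r⁻¹ ^ n) := by
      rw [hteq, inv_neg, neg_pow, neg_pow]; ring
    rw [this]
    rw [abs_div, abs_mul, abs_pow, abs_neg, abs_one, one_pow, one_mul]
    have h1 : (1:ℝ) ≤ r ^ n := one_le_pow₀ hr1
    have h2 : (0:ℝ) < r⁻¹ ^ n := by positivity
    have h3 : r ^ n * (r⁻¹ ^ n) = 1 := by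
      rw [← mul_pow, mul_inv_cancel₀ hr0.ne', one_pow]
    rw [abs_of_nonneg (by positivity), abs_of_nonneg (by norm_num : (0:ℝ) ≤ 2)]
    rw [le_div_iff₀ (by norm_num : (0:ℝ) < 2)]
    nlinarith

lemma cheb_complex_bound (n : ℕ) {ρ : ℝ} (hρ : 1 ≤ ρ) {z : ℂ}
    (hz : ‖z - 1‖ + ‖z + 1‖ ≤ 2 * ρ) :
    ‖(Polynomial.Chebyshev.T ℂ n).eval z‖ ≤ (Polynomial.Chebyshev.T ℝ n).eval ρ := by
  -- find a square root of z^2 - 1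
  obtain ⟨s, hs⟩ : ∃ s : ℂ, s ^ 2 = z ^ 2 - 1 := by
    by_cases h : z ^ 2 - 1 = 0
    · exact ⟨0, by rw [h]; ring⟩
    · refine ⟨(z ^ 2 - 1) ^ (((2:ℕ):ℂ))⁻¹, ?_⟩
      exact_mod_cast Complex.cpow_nat_inv_pow _ (two_ne_zero)
  have hprod : (z + s) * (z - s) = 1 := by linear_combination -hs
  obtain ⟨u, hu1, huz⟩ : ∃ u : ℂ, 1 ≤ ‖u‖ ∧ u + u⁻¹ = 2 * z := by
    have h1 : (z + s)⁻¹ = z - s := inv_eq_of_mul_eq_one_right hprod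
    have h2 : (z - s)⁻¹ = z + s := inv_eq_of_mul_eq_one_right (by linear_combination hprod)
    have hne : (z + s) ≠ 0 := by
      intro h; rw [h, zero_mul] at hprod; exact one_ne_zero hprod.symm
    have habs : ‖z + s‖ * ‖z - s‖ = 1 := by
      rw [← norm_mul, hprod, norm_one]
    rcases le_total 1 (‖z + s‖) with hc | hc
    · exact ⟨z + s, hc, by rw [h1]; ring⟩
    · refine ⟨z - s, ?_, by rw [h2]; ring⟩
      by_contra hlt
      push_neg at hlt
      nlinarith [norm_nonneg (z + s), norm_nonneg (z - s)]
  set t := ‖u‖ with htdef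
  have ht0 : (0:ℝ) < t := lt_of_lt_of_le one_pos hu1
  have hune : u ≠ 0 := by
    intro h; rw [h] at htdef; simp at htdef; rw [htdef] at ht0; exact lt_irrefl _ ht0
  -- z - 1 = (u-1)^2/(2u), z + 1 = (u+1)^2/(2u)
  have hinvu : u * u⁻¹ = 1 := mul_inv_cancel₀ hune
  have hu2 : u ^ 2 + 1 = 2 * z * u := by
    have h := congrArg (· * u) huz
    linear_combination h - hinvu
  have hzm : z - 1 = (u - 1) ^ 2 / (2 * u) := by
    rw [eq_div_iff (by simpa using hune)]
    linear_combination -hu2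
  have hzp : z + 1 = (u + 1) ^ 2 / (2 * u) := by
    rw [eq_div_iff (by simpa using hune)]
    linear_combination -hu2
  have hpar : ‖u - 1‖ ^ 2 + ‖u + 1‖ ^ 2 = 2 * t ^ 2 + 2 := by
    rw [htdef]
    rw [Complex.sq_norm, Complex.sq_norm, Complex.sq_norm]
    simp [Complex.normSq_apply, Complex.sub_re, Complex.sub_im, Complex.add_re, Complex.add_im]
    ring
  have habs_sum : ‖z - 1‖ + ‖z + 1‖ = t + t⁻¹ := by
    rw [hzm, hzp, norm_div, norm_div, norm_pow, norm_pow]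
    have h2u : ‖2 * u‖ = 2 * t := by
      rw [norm_mul]; simp [htdef]
    rw [h2u]
    rw [← add_div]
    rw [hpar]
    field_simp
  have htle : t + t⁻¹ ≤ 2 * ρ := by rw [← habs_sum]; exact hz
  -- evaluate T at z
  have hzeq : z = (u + u⁻¹) / 2 := by
    rw [huz]; ring
  have heval := cheb_joukowski u hune n
  rw [← hzeq] at heval
  rw [heval]
  have hbound : ‖(u ^ n + u⁻¹ ^ n) / 2‖ ≤ (t ^ n + t⁻¹ ^ n) / 2 := by
    rw [norm_div]
    simp only [Complex.norm_two]
    apply div_le_div_of_nonneg_right ?_ (by norm_num)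
    calc ‖u ^ n + u⁻¹ ^ n‖ ≤ ‖u ^ n‖ + ‖u⁻¹ ^ n‖ :=
          norm_add_le _ _
    _ = t ^ n + t⁻¹ ^ n := by rw [norm_pow, norm_pow, norm_inv]
  refine hbound.trans ?_
  rw [← cheb_real_joukowski t ht0.ne' n]
  apply cheb_mono
  · have := f_mono (le_refl (1:ℝ)) hu1
    simp at this
    linarith
  · linarith


lemma cheb_T_natDegree_le (R : Type*) [CommRing R] : ∀ n : ℕ, (T R n).natDegree ≤ n
  | 0 => by simp [Polynomial.Chebyshev.T_zero]
  | 1 => by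
      rw [show ((1:ℕ):ℤ) = (1:ℤ) by norm_num, Polynomial.Chebyshev.T_one]
      exact Polynomial.natDegree_X_le
  | (k+2) => by
      have h2 : ((k+2 : ℕ) : ℤ) = (k : ℤ) + 2 := by push_cast; ring
      have h1 : ((k+1 : ℕ) : ℤ) = (k : ℤ) + 1 := by push_cast; ring
      rw [h2, Polynomial.Chebyshev.T_add_two]
      have ih1 := cheb_T_natDegree_le R k
      have ih2 := cheb_T_natDegree_le R (k+1)
      rw [h1] at ih2
      refine le_trans (Polynomial.natDegree_sub_le _ _) ?_
      rw [max_le_iff]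
      constructor
      · refine le_trans (Polynomial.natDegree_mul_le) ?_
        have hx : (2 * Polynomial.X : Polynomial R).natDegree ≤ 1 := by
          refine le_trans (Polynomial.natDegree_mul_le) ?_
          simp [Polynomial.natDegree_X_le]
        omega
      · omega

lemma enorm2_nonneg {k : ℕ} (x : Fin k → ℂ) : 0 ≤ enorm2 x := Real.sqrt_nonneg _

lemma enorm2_eq_norm {k : ℕ} (x : Fin k → ℂ) :
    enorm2 x = ‖(WithLp.equiv 2 (Fin k → ℂ)).symm x‖ := by
  rw [EuclideanSpace.norm_eq, enorm2]
  congr 1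

lemma enorm2_mulVec_le {k : ℕ} (W : Matrix (Fin k) (Fin k) ℂ) (x : Fin k → ℂ) :
    enorm2 (W *ᵥ x) ≤ opNorm2 W * enorm2 x := by
  rw [enorm2_eq_norm, enorm2_eq_norm, opNorm2]
  have h := (Matrix.toEuclideanCLM (𝕜 := ℂ) W).le_opNorm ((WithLp.equiv 2 (Fin k → ℂ)).symm x)
  exact h

lemma sum_sq_eq_re_dot {k : ℕ} (x : Fin k → ℂ) :
    (∑ i, ‖x i‖ ^ 2) = (star x ⬝ᵥ x).re := by
  rw [dotProduct, Complex.re_sum]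
  refine Finset.sum_congr rfl fun i _ => ?_
  have : (star x) i * x i = ((Complex.normSq (x i) : ℝ) : ℂ) := by
    simp [Pi.star_apply, mul_comm, Complex.mul_conj]
  rw [this, Complex.ofReal_re, Complex.sq_norm]

lemma enorm2_unitary_mulVec {k : ℕ} (Q : Matrix (Fin k) (Fin k) ℂ)
    (hQ : Q ∈ Matrix.unitaryGroup (Fin k) ℂ) (x : Fin k → ℂ) :
    enorm2 (Qᴴ *ᵥ x) = enorm2 x := by
  have hQQ : Q * Qᴴ = 1 := by
    have := Matrix.mem_unitaryGroup_iff.mp hQ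
    rwa [Matrix.star_eq_conjTranspose] at this
  rw [enorm2, enorm2]
  congr 1
  rw [sum_sq_eq_re_dot, sum_sq_eq_re_dot]
  congr 1
  rw [Matrix.star_mulVec, ← dotProduct_mulVec, Matrix.conjTranspose_conjTranspose,
    Matrix.mulVec_mulVec, hQQ, Matrix.one_mulVec]

lemma enorm2_diag_le {k : ℕ} (v : Fin k → ℂ) (β : ℝ) (hβ : 0 ≤ β)
    (h : ∀ i, ‖v i‖ ≤ β) (x : Fin k → ℂ) :
    enorm2 (Matrix.diagonal v *ᵥ x) ≤ β * enorm2 x := by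
  rw [enorm2, enorm2, ← Real.sqrt_sq hβ, ← Real.sqrt_mul (by positivity)]
  apply Real.sqrt_le_sqrt
  rw [Finset.mul_sum]
  refine Finset.sum_le_sum fun i _ => ?_
  rw [Matrix.mulVec_diagonal, norm_mul, mul_pow]
  have hv := h i
  have h1 : ‖v i‖ = ‖v i‖ := rfl
  have h2 : (0:ℝ) ≤ ‖x i‖ ^ 2 := by positivity
  have h3 : ‖v i‖ ^ 2 ≤ β ^ 2 := by
    rw [h1]; nlinarith [norm_nonneg (v i)]
  exact mul_le_mul_of_nonneg_right h3 h2

lemma sum_split {α : Type*} [AddCommMonoid α] {N m : ℕ} (h : m + (N - m) = N)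
    (f : Fin N → α) :
    ∑ i, f i = (∑ i : Fin m, f (Fin.cast h (Fin.castAdd (N - m) i))) +
      ∑ i : Fin (N - m), f (Fin.cast h (Fin.natAdd m i)) := by
  have e := Fintype.sum_equiv (finCongr h) (fun i : Fin (m + (N - m)) => f (finCongr h i)) f
    (fun i => rfl)
  rw [← e, Fin.sum_univ_add]
  rfl

lemma T_eval_ofReal (n : ℕ) (x : ℝ) :
    (Polynomial.Chebyshev.T ℂ (n : ℤ)).eval ((x : ℝ) : ℂ) =
      (((Polynomial.Chebyshev.T ℝ (n : ℤ)).eval x : ℝ) : ℂ) := by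
  rw [← Polynomial.Chebyshev.map_T (algebraMap ℝ ℂ) (n : ℤ), Polynomial.eval_map,
    ← Complex.coe_algebraMap, Polynomial.eval₂_at_apply]

lemma opNorm2_nonneg {n : Type*} [Fintype n] [DecidableEq n] (W : Matrix n n ℂ) :
    0 ≤ opNorm2 W := norm_nonneg _

lemma sum_mulVec' {ι : Type*} {n : ℕ} (s : Finset ι) (M : ι → Matrix (Fin n) (Fin n) ℂ)
    (v : Fin n → ℂ) : (∑ i ∈ s, M i) *ᵥ v = ∑ i ∈ s, (M i *ᵥ v) := by
  funext t
  simp only [Matrix.mulVec, dotProduct, Matrix.sum_apply, Finset.sum_mul,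
    Finset.sum_apply]
  rw [Finset.sum_comm]

end Helpers

set_option maxHeartbeats 2000000 in
theorem deflated_gmres_convergence_bound_ellipse
    (N m : ℕ) (hm : 1 ≤ m) (hmN : m < N)
    (A V : Matrix (Fin N) (Fin N) ℂ) (l : Fin N → ℂ)
    (hV : IsUnit V) (hA : A = V * Matrix.diagonal l * V⁻¹)
    (Z : Matrix (Fin N) (Fin m) ℂ)
    (hZ : Z = Matrix.of fun (i : Fin N) (j : Fin m) => V i (Fin.castLE hmN.le j))
    (M : Matrix (Fin m) (Fin m) ℂ) (hM : M = Zᴴ * A * Z) (hMinv : IsUnit M)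
    (P : Matrix (Fin N) (Fin N) ℂ) (hP : P = 1 - A * Z * M⁻¹ * Zᴴ)
    (Q R : Matrix (Fin N) (Fin N) ℂ)
    (hQR : V = Q * R) (hQ : Q ∈ Matrix.unitaryGroup (Fin N) ℂ)
    (hR : R.BlockTriangular (id : Fin N → Fin N))
    (R₂₂ : Matrix (Fin (N - m)) (Fin (N - m)) ℂ)
    (hR₂₂ : R₂₂ = R.submatrix
      (fun i : Fin (N - m) => Fin.cast (Nat.add_sub_cancel' hmN.le) (Fin.natAdd m i))
      (fun i : Fin (N - m) => Fin.cast (Nat.add_sub_cancel' hmN.le) (Fin.natAdd m i)))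
    (c d a : ℝ) (hd : 0 < d) (hda : d ≤ a)
    (heig : ∀ i : Fin N, m ≤ (i : ℕ) → l i ∈ ellipseE c d a)
    (h0 : (0 : ℂ) ∉ ellipseE c d a)
    (b x₀ : Fin N → ℂ) (r₀ : Fin N → ℂ)
    (hr₀ : r₀ = P *ᵥ b - (P * A) *ᵥ x₀)
    (j : ℕ) (hj : 1 ≤ j) :
    sInf {t : ℝ | ∃ ξ : Fin N → ℂ,
        (∃ k ∈ krylov (P * A) r₀ j, ξ = x₀ + k) ∧
          t = enorm2 (P *ᵥ b - (P * A) *ᵥ ξ)} ≤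
      cond2 R₂₂ *
        ((Polynomial.Chebyshev.T ℝ j).eval (a / d) /
          |(Polynomial.Chebyshev.T ℝ j).eval (c / d)|) *
        enorm2 r₀ := by
  classical
  have hadd : m + (N - m) = N := Nat.add_sub_cancel' hmN.le
  have hVdet : IsUnit V.det := (Matrix.isUnit_iff_isUnit_det V).mp hV
  have hVV : V⁻¹ * V = 1 := Matrix.nonsing_inv_mul V hVdet
  have hVV' : V * V⁻¹ = 1 := Matrix.mul_nonsing_inv V hVdet
  have hMdet : IsUnit M.det := (Matrix.isUnit_iff_isUnit_det M).mp hMinv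
  have hMM : M * M⁻¹ = 1 := Matrix.mul_nonsing_inv M hMdet
  have hMM' : M⁻¹ * M = 1 := Matrix.nonsing_inv_mul M hMdet
  set Λ : Matrix (Fin N) (Fin N) ℂ := Matrix.diagonal l with hΛ
  set E : Matrix (Fin N) (Fin m) ℂ :=
    Matrix.of (fun i j => if i = Fin.castLE hmN.le j then 1 else 0) with hE
  have hZE : Z = V * E := by
    rw [hZ]
    ext i j
    simp only [Matrix.mul_apply, hE, Matrix.of_apply, mul_ite, mul_one, mul_zero]
    rw [Finset.sum_ite_eq' Finset.univ (Fin.castLE hmN.le j) (fun k => V i k)]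
    simp
  have hAV : A * V = V * Λ := by
    rw [hA]
    calc V * Λ * V⁻¹ * V = V * Λ * (V⁻¹ * V) := by rw [Matrix.mul_assoc]
    _ = V * Λ := by rw [hVV, Matrix.mul_one]
  set Λ₁ : Matrix (Fin m) (Fin m) ℂ :=
    Matrix.diagonal (fun j => l (Fin.castLE hmN.le j)) with hΛ₁
  have hΛE : Λ * E = E * Λ₁ := by
    ext i j
    rw [hΛ, hΛ₁, Matrix.diagonal_mul, Matrix.mul_diagonal]
    simp only [hE, Matrix.of_apply]
    by_cases h : i = Fin.castLE hmN.le j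
    · subst h; simp
    · simp [h]
  have hAZ : A * Z = Z * Λ₁ := by
    rw [hZE, ← Matrix.mul_assoc, hAV, Matrix.mul_assoc, hΛE, ← Matrix.mul_assoc]
  have hMeq' : Zᴴ * (A * Z) = M := by rw [← Matrix.mul_assoc]; exact hM.symm
  have hZP : Zᴴ * P = 0 := by
    rw [hP, Matrix.mul_sub, Matrix.mul_one]
    have h1 : Zᴴ * (A * Z * M⁻¹ * Zᴴ) = Zᴴ := by
      calc Zᴴ * (A * Z * M⁻¹ * Zᴴ) = (Zᴴ * (A * Z)) * M⁻¹ * Zᴴ := by simp only [Matrix.mul_sub, Matrix.sub_mul, Matrix.mul_one, Matrix.one_mul, Matrix.mul_assoc]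
      _ = M * M⁻¹ * Zᴴ := by rw [hMeq']
      _ = Zᴴ := by rw [hMM, Matrix.one_mul]
    rw [h1, sub_self]
  have hPAZ : P * A * Z = 0 := by
    calc P * A * Z = A * Z - A * Z * M⁻¹ * (Zᴴ * (A * Z)) := by rw [hP]; simp only [Matrix.mul_sub, Matrix.sub_mul, Matrix.mul_one, Matrix.one_mul, Matrix.mul_assoc]
    _ = A * Z - A * Z * (M⁻¹ * M) := by rw [hMeq']; simp only [Matrix.mul_sub, Matrix.sub_mul, Matrix.mul_one, Matrix.one_mul, Matrix.mul_assoc]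
    _ = 0 := by rw [hMM', Matrix.mul_one, sub_self]
  set G : Matrix (Fin N) (Fin N) ℂ := V⁻¹ * (P * A) * V with hG
  have hPAG : P * A = V * G * V⁻¹ := by
    rw [hG]
    symm
    calc V * (V⁻¹ * (P * A) * V) * V⁻¹
        = (V * V⁻¹) * (P * A) * (V * V⁻¹) := by simp only [Matrix.mul_sub, Matrix.sub_mul, Matrix.mul_one, Matrix.one_mul, Matrix.mul_assoc]
    _ = P * A := by rw [hVV', Matrix.one_mul, Matrix.mul_one]
  have hGE : G * E = 0 := by
    have h1 : G * E = V⁻¹ * (P * A * Z) := by rw [hZE, hG]; simp only [Matrix.mul_sub, Matrix.sub_mul, Matrix.mul_one, Matrix.one_mul, Matrix.mul_assoc]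
    rw [h1, hPAZ, Matrix.mul_zero]
  have hGcol : ∀ i t : Fin N, (t : ℕ) < m → G i t = 0 := by
    intro i t ht
    have h2 := congrFun (congrFun hGE i) ⟨(t : ℕ), ht⟩
    simp only [Matrix.mul_apply, hE, Matrix.of_apply, Matrix.zero_apply, mul_ite, mul_one,
      mul_zero] at h2
    rw [Finset.sum_ite_eq' Finset.univ (Fin.castLE hmN.le ⟨(t : ℕ), ht⟩) (fun k => G i k)] at h2
    simp only [Finset.mem_univ, if_true] at h2
    have hcast : Fin.castLE hmN.le ⟨(t : ℕ), ht⟩ = t := by ext; rfl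
    rwa [hcast] at h2
  have hPA2 : P * A = A - A * Z * (M⁻¹ * (Zᴴ * A)) := by rw [hP]; simp only [Matrix.mul_sub, Matrix.sub_mul, Matrix.mul_one, Matrix.one_mul, Matrix.mul_assoc]
  have hGdec : G = Λ - E * (Λ₁ * (M⁻¹ * (Zᴴ * (V * Λ)))) := by
    have e1 : V⁻¹ * (A * V) = Λ := by rw [hAV, ← Matrix.mul_assoc, hVV, Matrix.one_mul]
    have e2 : V⁻¹ * (A * Z) = E * Λ₁ := by
      rw [hAZ, hZE]
      calc V⁻¹ * (V * E * Λ₁) = (V⁻¹ * V) * (E * Λ₁) := by simp only [Matrix.mul_sub, Matrix.sub_mul, Matrix.mul_one, Matrix.one_mul, Matrix.mul_assoc]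
      _ = E * Λ₁ := by rw [hVV, Matrix.one_mul]
    rw [hG, hPA2]
    calc V⁻¹ * (A - A * Z * (M⁻¹ * (Zᴴ * A))) * V
        = V⁻¹ * (A * V) - V⁻¹ * (A * Z) * (M⁻¹ * (Zᴴ * (A * V))) := by simp only [Matrix.mul_sub, Matrix.sub_mul, Matrix.mul_one, Matrix.one_mul, Matrix.mul_assoc]
    _ = Λ - (E * Λ₁) * (M⁻¹ * (Zᴴ * (V * Λ))) := by rw [e1, e2, hAV]
    _ = Λ - E * (Λ₁ * (M⁻¹ * (Zᴴ * (V * Λ)))) := by rw [Matrix.mul_assoc]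
  have hGrow : ∀ i t : Fin N, m ≤ (i : ℕ) → G i t = (if i = t then l i else 0) := by
    intro i t hi
    rw [hGdec]
    have hEB : (E * (Λ₁ * (M⁻¹ * (Zᴴ * (V * Λ))))) i t = 0 := by
      rw [Matrix.mul_apply]
      apply Finset.sum_eq_zero
      intro k _
      have hik : E i k = 0 := by
        simp only [hE, Matrix.of_apply, ite_eq_right_iff]
        intro h
        exfalso
        have : (i : ℕ) = ((Fin.castLE hmN.le k : Fin N) : ℕ) := by rw [h]
        have hk : ((Fin.castLE hmN.le k : Fin N) : ℕ) = (k : ℕ) := rfl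
        have := k.isLt
        omega
      rw [hik, zero_mul]
    rw [Matrix.sub_apply, hEB, sub_zero, hΛ, Matrix.diagonal_apply]
  have hGpow : ∀ k : ℕ, (∀ i t : Fin N, (t : ℕ) < m → (G ^ (k + 1)) i t = 0) ∧
      (∀ i t : Fin N, m ≤ (i : ℕ) →
        (G ^ (k + 1)) i t = if i = t then l i ^ (k + 1) else 0) := by
    intro k
    induction k with
    | zero =>
      constructor
      · intro i t ht; rw [pow_one]; exact hGcol i t ht
      · intro i t hi; rw [pow_one, hGrow i t hi]; simp
    | succ k ih =>
      have hpow : G ^ (k + 2) = G ^ (k + 1) * G := by rw [pow_succ]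
      constructor
      · intro i t ht
        rw [hpow, Matrix.mul_apply]
        apply Finset.sum_eq_zero
        intro s _
        rw [hGcol s t ht, mul_zero]
      · intro i t hi
        rw [hpow, Matrix.mul_apply]
        have hterm : ∀ s, (G ^ (k + 1)) i s * G s t
            = if s = i then l i ^ (k + 1) * G i t else 0 := by
          intro s
          rw [ih.2 i s hi]
          by_cases h : i = s
          · subst h; simp
          · simp [h, Ne.symm h]
        rw [Finset.sum_congr rfl (fun s _ => hterm s),
          Finset.sum_ite_eq' Finset.univ i (fun _ => l i ^ (k + 1) * G i t)]
        simp only [Finset.mem_univ, if_true]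
        rw [hGrow i t hi]
        by_cases h : i = t
        · subst h; simp [pow_succ]
        · simp [h]
  -- scalar facts
  have hd0 : ((d : ℝ) : ℂ) ≠ 0 := by exact_mod_cast hd.ne'
  have hρ1 : (1:ℝ) ≤ a / d := (one_le_div hd).mpr hda
  have habs0 : 2 * a < |c - d| + |c + d| := by
    have h0' := h0
    simp only [ellipseE, Set.mem_setOf_eq, not_le] at h0'
    have e1 : ‖0 - ((c:ℂ) - (d:ℂ))‖ = |c - d| := by
      rw [zero_sub]
      rw [show ((c:ℂ) - (d:ℂ)) = (((c - d : ℝ)) : ℂ) by push_cast; ring]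
      rw [norm_neg, Complex.norm_real, Real.norm_eq_abs]
    have e2 : ‖0 - ((c:ℂ) + (d:ℂ))‖ = |c + d| := by
      rw [zero_sub]
      rw [show ((c:ℂ) + (d:ℂ)) = (((c + d : ℝ)) : ℂ) by push_cast; ring]
      rw [norm_neg, Complex.norm_real, Real.norm_eq_abs]
    rw [e1, e2] at h0'
    exact h0'
  have hac : a < |c| := by
    by_contra hle
    push_neg at hle
    have h1 := abs_le.mp hle
    rcases le_total (c - d) 0 with h2 | h2 <;> rcases le_total (c + d) 0 with h3 | h3
    · rw [abs_of_nonpos h2, abs_of_nonpos h3] at habs0; linarith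
    · rw [abs_of_nonpos h2, abs_of_nonneg h3] at habs0; linarith
    · rw [abs_of_nonneg h2, abs_of_nonpos h3] at habs0; linarith
    · rw [abs_of_nonneg h2, abs_of_nonneg h3] at habs0; linarith
  have hcd1 : (1:ℝ) ≤ |c / d| := by
    rw [abs_div, abs_of_pos hd]
    rw [le_div_iff₀ hd]
    linarith
  set τ : ℝ := (Polynomial.Chebyshev.T ℝ (j:ℤ)).eval (c / d) with hτ
  have hτabs : 1 ≤ |τ| := one_le_abs_cheb j hcd1
  have hτ0 : τ ≠ 0 := by
    intro h
    rw [h] at hτabs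
    simp at hτabs
    linarith
  have hτC0 : ((τ : ℝ) : ℂ) ≠ 0 := by exact_mod_cast hτ0
  have hTad : 1 ≤ (Polynomial.Chebyshev.T ℝ (j:ℤ)).eval (a / d) := one_le_cheb j hρ1
  set β : ℝ := (Polynomial.Chebyshev.T ℝ (j:ℤ)).eval (a / d) / |τ| with hβdef
  have hβ0 : 0 ≤ β := by
    apply div_nonneg (by linarith) (abs_nonneg _)
  set pC : Polynomial ℂ := Polynomial.C (((τ : ℝ) : ℂ))⁻¹ *
    ((Polynomial.Chebyshev.T ℂ (j:ℤ)).comp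
      (Polynomial.C (((c / d : ℝ) : ℂ)) - Polynomial.C (((d : ℝ) : ℂ))⁻¹ * Polynomial.X))
    with hpC
  have hpCeval : ∀ z : ℂ, pC.eval z = (((τ : ℝ) : ℂ))⁻¹ *
      (Polynomial.Chebyshev.T ℂ (j:ℤ)).eval ((((c / d : ℝ)) : ℂ) - (((d : ℝ)) : ℂ)⁻¹ * z) := by
    intro z
    rw [hpC, Polynomial.eval_mul, Polynomial.eval_C, Polynomial.eval_comp]
    simp
  have hpC0 : pC.coeff 0 = 1 := by
    rw [Polynomial.coeff_zero_eq_eval_zero, hpCeval 0, mul_zero, sub_zero,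
      T_eval_ofReal j (c / d), ← hτ]
    exact inv_mul_cancel₀ hτC0
  have hpCbound : ∀ z : ℂ, z ∈ ellipseE c d a → ‖pC.eval z‖ ≤ β := by
    intro z hz
    simp only [ellipseE, Set.mem_setOf_eq] at hz
    rw [hpCeval z, norm_mul, norm_inv, Complex.norm_real, Real.norm_eq_abs]
    set w : ℂ := (((c / d : ℝ)) : ℂ) - (((d : ℝ)) : ℂ)⁻¹ * z with hw
    have e1 : w - 1 = -(z - ((c:ℂ) - (d:ℂ))) / ((d : ℝ) : ℂ) := by
      rw [hw, eq_div_iff hd0]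
      push_cast
      field_simp
      ring
    have e2 : w + 1 = -(z - ((c:ℂ) + (d:ℂ))) / ((d : ℝ) : ℂ) := by
      rw [hw, eq_div_iff hd0]
      push_cast
      field_simp
      ring
    have hwe : ‖w - 1‖ + ‖w + 1‖ ≤ 2 * (a / d) := by
      rw [e1, e2, norm_div, norm_div, norm_neg, norm_neg, Complex.norm_real, Real.norm_eq_abs,
        abs_of_pos hd]
      rw [← add_div, div_le_iff₀ hd]
      calc ‖z - ((c:ℂ) - (d:ℂ))‖ + ‖z - ((c:ℂ) + (d:ℂ))‖ ≤ 2 * a := hz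
      _ = 2 * (a / d) * d := by field_simp
    have hcb := cheb_complex_bound j hρ1 hwe
    rw [hβdef, div_eq_inv_mul]
    exact mul_le_mul_of_nonneg_left hcb (by positivity)
  have hdegC : pC.natDegree ≤ j := by
    rw [hpC]
    refine le_trans (Polynomial.natDegree_mul_le) ?_
    rw [Polynomial.natDegree_C, zero_add]
    refine le_trans (Polynomial.natDegree_comp_le) ?_
    have h1 : (Polynomial.C (((c / d : ℝ)) : ℂ) -
        Polynomial.C (((d : ℝ)) : ℂ)⁻¹ * Polynomial.X).natDegree ≤ 1 := by
      refine le_trans (Polynomial.natDegree_sub_le _ _) ?_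
      rw [max_le_iff]
      refine ⟨by simp, ?_⟩
      refine le_trans (Polynomial.natDegree_mul_le) ?_
      simp [Polynomial.natDegree_X_le]
    refine le_trans (Nat.mul_le_mul (cheb_T_natDegree_le ℂ j) h1) (by omega)
  have hconjpow : ∀ k : ℕ, (V * G * V⁻¹) ^ k = V * G ^ k * V⁻¹ := by
    intro k
    induction k with
    | zero => rw [pow_zero, pow_zero, Matrix.mul_one, hVV']
    | succ k ih =>
      rw [pow_succ, pow_succ, ih]
      calc V * G ^ k * V⁻¹ * (V * G * V⁻¹)
          = V * (G ^ k * ((V⁻¹ * V) * (G * V⁻¹))) := by simp only [Matrix.mul_assoc]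
      _ = V * (G ^ k * G) * V⁻¹ := by rw [hVV, Matrix.one_mul]; simp only [Matrix.mul_assoc]
  set F : Matrix (Fin N) (Fin N) ℂ := Polynomial.aeval G pC with hF
  have haeval : Polynomial.aeval (P * A) pC = V * F * V⁻¹ := by
    rw [hPAG, hF, Polynomial.aeval_eq_sum_range, Polynomial.aeval_eq_sum_range]
    have hterm : ∀ i : ℕ, pC.coeff i • (V * G * V⁻¹) ^ i = V * (pC.coeff i • G ^ i) * V⁻¹ := by
      intro i
      rw [hconjpow i, Matrix.mul_smul, Matrix.smul_mul]
    rw [Finset.sum_congr rfl (fun i _ => hterm i), ← Finset.sum_mul, ← Matrix.mul_sum]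
  have hFsum : F = ∑ k ∈ Finset.range (pC.natDegree + 1), pC.coeff k • G ^ k := by
    rw [hF, Polynomial.aeval_eq_sum_range]
  have hFcol : ∀ i t : Fin N, (t : ℕ) < m → F i t = if i = t then 1 else 0 := by
    intro i t ht
    rw [hFsum, Matrix.sum_apply]
    rw [Finset.sum_eq_single 0 ?h0 (fun h => absurd (Finset.mem_range.mpr (by omega)) h)]
    · rw [pow_zero, Matrix.smul_apply, hpC0, Matrix.one_apply, one_smul]
    case h0 =>
      intro k _ hk
      obtain ⟨k', rfl⟩ : ∃ k', k = k' + 1 := ⟨k - 1, by omega⟩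
      rw [Matrix.smul_apply, (hGpow k').1 i t ht, smul_zero]
  have hFrow : ∀ i t : Fin N, m ≤ (i : ℕ) →
      F i t = if i = t then pC.eval (l i) else 0 := by
    intro i t hi
    rw [hFsum, Matrix.sum_apply]
    by_cases h : i = t
    · subst h
      rw [if_pos rfl, Polynomial.eval_eq_sum_range]
      refine Finset.sum_congr rfl fun k _ => ?_
      rw [Matrix.smul_apply, smul_eq_mul]
      rcases Nat.eq_zero_or_pos k with rfl | hk
      · simp
      · obtain ⟨k', rfl⟩ : ∃ k', k = k' + 1 := ⟨k - 1, by omega⟩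
        rw [(hGpow k').2 i i hi, if_pos rfl]
    · rw [if_neg h]
      refine Finset.sum_eq_zero fun k _ => ?_
      rw [Matrix.smul_apply, smul_eq_mul]
      rcases Nat.eq_zero_or_pos k with rfl | hk
      · rw [pow_zero, Matrix.one_apply_ne h, mul_zero]
      · obtain ⟨k', rfl⟩ : ∃ k', k = k' + 1 := ⟨k - 1, by omega⟩
        rw [(hGpow k').2 i t hi, if_neg h, mul_zero]
  have hQQ' : Qᴴ * Q = 1 := by
    have h := Matrix.mem_unitaryGroup_iff'.mp hQ
    rwa [Matrix.star_eq_conjTranspose] at h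
  have hRdet : IsUnit R.det := by
    have hdetV : V.det = Q.det * R.det := by rw [hQR, Matrix.det_mul]
    have h := hVdet
    rw [hdetV] at h
    exact (IsUnit.mul_iff.mp h).2
  have hRdiag : ∀ i : Fin N, R i i ≠ 0 := by
    intro i h
    have hdet : R.det = 0 := by
      rw [Matrix.det_of_upperTriangular hR]
      exact Finset.prod_eq_zero (Finset.mem_univ i) h
    rw [hdet] at hRdet
    exact (by simp : ¬ IsUnit (0:ℂ)) hRdet
  have htri : ∀ x : Fin N → ℂ, Zᴴ *ᵥ x = 0 → ∀ i : Fin N, (i : ℕ) < m → (Qᴴ *ᵥ x) i = 0 := by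
    intro x hx
    have hZHx : ∀ i : Fin N, (i : ℕ) < m → (Rᴴ *ᵥ (Qᴴ *ᵥ x)) i = 0 := by
      intro i hi
      set v : Fin N → ℂ := Rᴴ *ᵥ (Qᴴ *ᵥ x) with hv
      have h1 : Zᴴ *ᵥ x = Eᴴ *ᵥ v := by
        rw [hv, hZE, hQR]
        simp only [Matrix.conjTranspose_mul, Matrix.mulVec_mulVec, Matrix.mul_assoc]
      rw [hx] at h1
      have h2 := congrFun h1.symm (⟨(i : ℕ), hi⟩ : Fin m)
      simp only [Matrix.mulVec, dotProduct, Matrix.conjTranspose_apply, hE,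
        Matrix.of_apply, Pi.zero_apply, apply_ite, star_one, star_zero, ite_mul, one_mul,
        zero_mul] at h2
      rw [Finset.sum_ite_eq' Finset.univ (Fin.castLE hmN.le ⟨(i : ℕ), hi⟩)
        (fun k => v k)] at h2
      simp only [Finset.mem_univ, if_true] at h2
      have hcast : Fin.castLE hmN.le ⟨(i : ℕ), hi⟩ = i := by ext; rfl
      rwa [hcast] at h2
    have main : ∀ n : ℕ, ∀ i : Fin N, (i : ℕ) = n → n < m → (Qᴴ *ᵥ x) i = 0 := by
      intro n
      induction n using Nat.strong_induction_on with
      | _ n ih =>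
        intro i hin hnm
        have h0 := hZHx i (by omega)
        rw [Matrix.mulVec, dotProduct] at h0
        have hsum : ∀ t : Fin N, t ∈ Finset.univ → t ≠ i →
            Rᴴ i t * (Qᴴ *ᵥ x) t = 0 := by
          intro t _ hti
          have hne : (t : ℕ) ≠ n := by
            intro h; exact hti (Fin.ext (by omega))
          rcases Nat.lt_or_ge (t : ℕ) n with hlt | hge
          · rw [ih (t : ℕ) hlt t rfl (by omega), mul_zero]
          · have hit : i < t := by
              rw [Fin.lt_def]; omega
            rw [Matrix.conjTranspose_apply, hR hit, star_zero, zero_mul]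
        rw [Finset.sum_eq_single_of_mem i (Finset.mem_univ i) hsum] at h0
        rcases mul_eq_zero.mp h0 with h | h
        · exfalso
          rw [Matrix.conjTranspose_apply] at h
          exact hRdiag i (by simpa using h)
        · exact h
    intro i hi
    exact main (i : ℕ) i rfl hi
  -- vectors
  set u : Fin N → ℂ := (Polynomial.aeval (P * A) pC) *ᵥ r₀ with hu
  set y : Fin N → ℂ := V⁻¹ *ᵥ r₀ with hy
  have hr₀V : V *ᵥ y = r₀ := by rw [hy, Matrix.mulVec_mulVec, hVV', Matrix.one_mulVec]
  have huVF : u = V *ᵥ (F *ᵥ y) := by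
    rw [hu, haeval, hy, Matrix.mulVec_mulVec, Matrix.mulVec_mulVec]
  have e1 : Zᴴ * (P * A) = 0 := by
    rw [← Matrix.mul_assoc, hZP, Matrix.zero_mul]
  have hZr₀ : Zᴴ *ᵥ r₀ = 0 := by
    rw [hr₀, Matrix.mulVec_sub, Matrix.mulVec_mulVec, Matrix.mulVec_mulVec, hZP, e1,
      Matrix.zero_mulVec, Matrix.zero_mulVec, sub_self]
  have hZu : Zᴴ *ᵥ u = 0 := by
    rw [hu, Matrix.mulVec_mulVec]
    have h2 : Zᴴ * (Polynomial.aeval (P * A) pC) = Zᴴ := by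
      rw [Polynomial.aeval_eq_sum_range, Matrix.mul_sum]
      rw [Finset.sum_eq_single 0 ?hz (fun h => absurd (Finset.mem_range.mpr (by omega)) h)]
      · rw [pow_zero, Matrix.mul_smul, Matrix.mul_one, hpC0, one_smul]
      case hz =>
        intro k _ hk
        obtain ⟨k', rfl⟩ : ∃ k', k = k' + 1 := ⟨k - 1, by omega⟩
        rw [Matrix.mul_smul, pow_succ', ← Matrix.mul_assoc, e1, Matrix.zero_mul, smul_zero]
    rw [h2, hZr₀]
  have hw0 : ∀ i : Fin N, (i : ℕ) < m → (Qᴴ *ᵥ r₀) i = 0 := htri r₀ hZr₀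
  have hz0 : ∀ i : Fin N, (i : ℕ) < m → (Qᴴ *ᵥ u) i = 0 := htri u hZu
  have hQV : Qᴴ * V = R := by rw [hQR, ← Matrix.mul_assoc, hQQ', Matrix.one_mul]
  have hwR : Qᴴ *ᵥ r₀ = R *ᵥ y := by rw [← hr₀V, Matrix.mulVec_mulVec, hQV]
  have hzR : Qᴴ *ᵥ u = R *ᵥ (F *ᵥ y) := by rw [huVF, Matrix.mulVec_mulVec, hQV]
  -- index machinery
  set idx : Fin (N - m) → Fin N := fun i => Fin.cast hadd (Fin.natAdd m i) with hidx
  have hidxval : ∀ i : Fin (N - m), (idx i : ℕ) = m + (i : ℕ) := fun i => rfl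
  set top : Fin m → Fin N := fun i => Fin.cast hadd (Fin.castAdd (N - m) i) with htop
  have htopval : ∀ i : Fin m, ((top i : Fin N) : ℕ) = (i : ℕ) := fun i => rfl
  have hR22 : ∀ i j', R₂₂ i j' = R (idx i) (idx j') := by
    intro i j'; rw [hR₂₂]; rfl
  have hR22tri : R₂₂.BlockTriangular id := by
    intro i j' hij
    rw [hR22]
    apply hR
    show idx j' < idx i
    rw [Fin.lt_def, hidxval, hidxval]
    have : (j' : ℕ) < (i : ℕ) := hij
    omega
  have hR22det : IsUnit R₂₂.det := by
    rw [Matrix.det_of_upperTriangular hR22tri]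
    apply isUnit_iff_ne_zero.mpr
    refine Finset.prod_ne_zero_iff.mpr fun i _ => ?_
    rw [hR22]
    exact hRdiag (idx i)
  have hR22inv : R₂₂⁻¹ * R₂₂ = 1 := Matrix.nonsing_inv_mul R₂₂ hR22det
  have hsplitR : ∀ (v : Fin N → ℂ) (i : Fin (N - m)),
      (R *ᵥ v) (idx i) = ∑ t : Fin (N - m), R (idx i) (idx t) * v (idx t) := by
    intro v i
    rw [Matrix.mulVec, dotProduct]
    rw [sum_split hadd (f := fun t => R (idx i) t * v t)]
    have hz : ∀ t : Fin m, R (idx i) (top t) * v (top t) = 0 := by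
      intro t
      have hlt : (top t : Fin N) < idx i := by
        rw [Fin.lt_def, htopval, hidxval]
        have := t.isLt
        omega
      rw [hR (i := idx i) (j := top t) hlt, zero_mul]
    rw [Finset.sum_congr rfl (fun t _ => hz t), Finset.sum_const_zero, zero_add]
  have hFy : ∀ t : Fin (N - m), (F *ᵥ y) (idx t) = pC.eval (l (idx t)) * y (idx t) := by
    intro t
    rw [Matrix.mulVec, dotProduct]
    have hrow : ∀ s : Fin N, F (idx t) s * y s =
        if idx t = s then pC.eval (l (idx t)) * y s else 0 := by
      intro s
      rw [hFrow (idx t) s (by rw [hidxval]; omega)]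
      by_cases h : idx t = s
      · simp [h]
      · simp [h]
    rw [Finset.sum_congr rfl (fun s _ => hrow s)]
    rw [Finset.sum_ite_eq Finset.univ (idx t) (fun s => pC.eval (l (idx t)) * y s)]
    simp
  set D : Matrix (Fin (N - m)) (Fin (N - m)) ℂ :=
    Matrix.diagonal (fun i => pC.eval (l (idx i))) with hD
  have key1 : (fun i => (Qᴴ *ᵥ u) (idx i)) = R₂₂ *ᵥ (D *ᵥ (fun i => y (idx i))) := by
    funext i
    calc (Qᴴ *ᵥ u) (idx i) = (R *ᵥ (F *ᵥ y)) (idx i) := by rw [hzR]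
    _ = ∑ t, R (idx i) (idx t) * (F *ᵥ y) (idx t) := hsplitR _ i
    _ = ∑ t, R₂₂ i t * (pC.eval (l (idx t)) * y (idx t)) := by
        refine Finset.sum_congr rfl fun t _ => by rw [hR22, hFy]
    _ = (R₂₂ *ᵥ (D *ᵥ fun i => y (idx i))) i := by
        rw [Matrix.mulVec, dotProduct]
        refine Finset.sum_congr rfl fun t _ => ?_
        rw [hD, Matrix.mulVec_diagonal]
  have key2 : (fun i => (Qᴴ *ᵥ r₀) (idx i)) = R₂₂ *ᵥ (fun i => y (idx i)) := by
    funext i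
    calc (Qᴴ *ᵥ r₀) (idx i) = (R *ᵥ y) (idx i) := by rw [hwR]
    _ = ∑ t, R (idx i) (idx t) * y (idx t) := hsplitR y i
    _ = (R₂₂ *ᵥ fun i => y (idx i)) i := by
        rw [Matrix.mulVec, dotProduct]
        exact Finset.sum_congr rfl fun t _ => by rw [hR22]
  have hy₂ : (fun i => y (idx i)) = R₂₂⁻¹ *ᵥ (fun i => (Qᴴ *ᵥ r₀) (idx i)) := by
    rw [key2, Matrix.mulVec_mulVec, hR22inv, Matrix.one_mulVec]
  have hnorm_split : ∀ v : Fin N → ℂ, (∀ i : Fin N, (i : ℕ) < m → v i = 0) →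
      enorm2 v = enorm2 (fun i => v (idx i)) := by
    intro v hv
    rw [enorm2, enorm2]
    congr 1
    rw [sum_split hadd (f := fun i => ‖v i‖ ^ 2)]
    have h1 : ∀ t : Fin m, ‖v (top t)‖ ^ 2 = 0 := by
      intro t
      rw [hv (top t) (by rw [htopval]; exact t.isLt)]
      simp
    rw [Finset.sum_congr rfl (fun t _ => h1 t), Finset.sum_const_zero, zero_add]
  have hnu : enorm2 u = enorm2 (fun i => (Qᴴ *ᵥ u) (idx i)) := by
    rw [← enorm2_unitary_mulVec Q hQ u]
    exact hnorm_split _ hz0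
  have hnr : enorm2 r₀ = enorm2 (fun i => (Qᴴ *ᵥ r₀) (idx i)) := by
    rw [← enorm2_unitary_mulVec Q hQ r₀]
    exact hnorm_split _ hw0
  have hDb : ∀ i : Fin (N - m), ‖pC.eval (l (idx i))‖ ≤ β :=
    fun i => hpCbound _ (heig (idx i) (by rw [hidxval]; omega))
  have hchain : enorm2 u ≤ cond2 R₂₂ * β * enorm2 r₀ := by
    rw [hnu, key1, hy₂]
    calc enorm2 (R₂₂ *ᵥ (D *ᵥ (R₂₂⁻¹ *ᵥ fun i => (Qᴴ *ᵥ r₀) (idx i))))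
        ≤ opNorm2 R₂₂ * enorm2 (D *ᵥ (R₂₂⁻¹ *ᵥ fun i => (Qᴴ *ᵥ r₀) (idx i))) :=
          enorm2_mulVec_le _ _
    _ ≤ opNorm2 R₂₂ * (β * enorm2 (R₂₂⁻¹ *ᵥ fun i => (Qᴴ *ᵥ r₀) (idx i))) := by
        exact mul_le_mul_of_nonneg_left (enorm2_diag_le _ β hβ0 hDb _) (opNorm2_nonneg _)
    _ ≤ opNorm2 R₂₂ * (β * (opNorm2 R₂₂⁻¹ * enorm2 (fun i => (Qᴴ *ᵥ r₀) (idx i)))) := by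
        exact mul_le_mul_of_nonneg_left
          (mul_le_mul_of_nonneg_left (enorm2_mulVec_le _ _) hβ0) (opNorm2_nonneg _)
    _ = cond2 R₂₂ * β * enorm2 r₀ := by rw [← hnr, cond2]; ring
  -- candidate point
  set q : Polynomial ℂ := pC.divX with hq
  have hqdeg : q.natDegree < j := by
    rw [hq, Polynomial.natDegree_divX_eq_natDegree_tsub_one]
    omega
  set kvec : Fin N → ℂ := -((Polynomial.aeval (P * A) q) *ᵥ r₀) with hkvec
  have hkmem : kvec ∈ krylov (P * A) r₀ j := by
    rw [hkvec]
    apply neg_mem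
    rw [Polynomial.aeval_eq_sum_range, sum_mulVec']
    apply Submodule.sum_mem
    intro i hi
    rw [Matrix.smul_mulVec]
    apply Submodule.smul_mem
    apply Submodule.subset_span
    exact ⟨i, by simp only [Finset.mem_range] at hi; omega, rfl⟩
  have hresid : P *ᵥ b - (P * A) *ᵥ (x₀ + kvec) = u := by
    have hpXq : pC = Polynomial.X * q + Polynomial.C 1 := by
      rw [hq, ← hpC0]
      exact (Polynomial.X_mul_divX_add pC).symm
    have haq : Polynomial.aeval (P * A) pC = (P * A) * Polynomial.aeval (P * A) q + 1 := by
      conv_lhs => rw [hpXq]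
      rw [map_add, _root_.map_mul, Polynomial.aeval_X, Polynomial.aeval_C, _root_.map_one]
    have hu2 : u = (P * A) *ᵥ ((Polynomial.aeval (P * A) q) *ᵥ r₀) + r₀ := by
      rw [hu, haq, Matrix.add_mulVec, Matrix.one_mulVec, Matrix.mulVec_mulVec]
    rw [Matrix.mulVec_add, hu2, hkvec, Matrix.mulVec_neg, hr₀]
    have habel : ∀ (xb xx w : Fin N → ℂ), xb - (xx + -w) = w + (xb - xx) := by
      intros; abel
    exact habel _ _ _
  -- conclusion
  have hbdd : BddBelow {t : ℝ | ∃ ξ : Fin N → ℂ,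
      (∃ k ∈ krylov (P * A) r₀ j, ξ = x₀ + k) ∧
        t = enorm2 (P *ᵥ b - (P * A) *ᵥ ξ)} := by
    refine ⟨0, ?_⟩
    rintro t ⟨ξ, hξ, rfl⟩
    exact enorm2_nonneg _
  have hmem : enorm2 u ∈ {t : ℝ | ∃ ξ : Fin N → ℂ,
      (∃ k ∈ krylov (P * A) r₀ j, ξ = x₀ + k) ∧
        t = enorm2 (P *ᵥ b - (P * A) *ᵥ ξ)} :=
    ⟨x₀ + kvec, ⟨kvec, hkmem, rfl⟩, by rw [hresid]⟩
  exact le_trans (csInf_le hbdd hmem) hchain
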